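/- arXiv:1810.07770 — 2 statements merged into one kernel-verified Lean document; each statement's English description precedes it below -/
import Mathlib

section
/- Let p ∈ ℕ be even and let a₁, ..., a_p ∈ (-1, 1). Define the p × (p+1) matrix M with entries M(j,l) = a_j if l = j ≤ p, M(j,l) = (-1)^{l-1} if l < j ≤ p, M(j,l) = (-1)^l if j < l ≤ p, and M(j, p+1) = 1. Then there exists a nonzero vector ν ∈ ℝ^{p+1} in the null space of M whose first p components are all strictly positive. -/
noncomputable def mkKer (a : ℕ → ℝ) : ℕ → ℝ
  | 0 => 1
  | (j+1) => mkKer a j * ((a j - (-1)^j) / (a (j+1) - (-1)^j))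

lemma mkKer_pos {p : ℕ} {a : ℕ → ℝ} (ha : ∀ j < p, a j ∈ Set.Ioo (-1:ℝ) 1) :
    ∀ j < p, 0 < mkKer a j := by
  intro j
  induction j with
  | zero => intro _; simp [mkKer]
  | succ k ih =>
    intro hk
    have hk' : k < p := Nat.lt_of_succ_lt hk
    have h1 := ha k hk'
    have h2 := ha (k+1) hk
    have hkpos := ih hk'
    have hq : 0 < (a k - (-1:ℝ)^k) / (a (k+1) - (-1)^k) := by
      rcases Nat.even_or_odd k with he | ho
      · rw [he.neg_one_pow]
        exact div_pos_of_neg_of_neg (by linarith [h1.2]) (by linarith [h2.2])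
      · rw [ho.neg_one_pow]
        apply div_pos <;> simp only [sub_neg_eq_add] <;> linarith [h1.1, h2.1]
    exact mul_pos hkpos hq

lemma mkKer_identity {p : ℕ} {a : ℕ → ℝ} (ha : ∀ j < p, a j ∈ Set.Ioo (-1:ℝ) 1)
    {j : ℕ} (hj : j + 1 < p) :
    (a (j+1) - (-1)^j) * mkKer a (j+1) = (a j - (-1)^j) * mkKer a j := by
  have h2 := ha (j+1) hj
  have hne : a (j+1) - (-1:ℝ)^j ≠ 0 := by
    rcases Nat.even_or_odd j with he | ho
    · rw [he.neg_one_pow]; exact sub_ne_zero.mpr (ne_of_lt h2.2)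
    · rw [ho.neg_one_pow]; simp only [sub_neg_eq_add]
      intro h; have : a (j+1) = -1 := by linarith
      linarith [h2.1]
  show (a (j+1) - (-1)^j) * (mkKer a j * ((a j - (-1)^j) / (a (j+1) - (-1)^j))) = _
  field_simp

theorem matrix_M_positive_kernel (p : ℕ) (hp : Even p)
    (a : Fin p → ℝ) (ha : ∀ j, a j ∈ Set.Ioo (-1 : ℝ) 1)
    (M : Matrix (Fin p) (Fin (p + 1)) ℝ)
    (hdiag : ∀ j : Fin p, M j j.castSucc = a j)
    (hbelow : ∀ j l : Fin p, l < j → M j l.castSucc = (-1 : ℝ) ^ (l : ℕ))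
    (habove : ∀ j l : Fin p, j < l → M j l.castSucc = (-1 : ℝ) ^ ((l : ℕ) + 1))
    (hlast : ∀ j : Fin p, M j (Fin.last p) = 1) :
    ∃ ν : Fin (p + 1) → ℝ, ν ≠ 0 ∧ M.mulVec ν = 0 ∧
      ∀ l : Fin p, 0 < ν l.castSucc := by
  rcases Nat.eq_zero_or_pos p with hp0 | hp0
  · subst hp0
    refine ⟨fun _ => 1, ?_, ?_, ?_⟩
    · intro h; have := congrFun h 0; simp at this
    · funext j; exact j.elim0
    · intro l; exact l.elim0
  · classical
    set A : ℕ → ℝ := fun j => if h : j < p then a ⟨j, h⟩ else 0 with hA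
    have hA' : ∀ j < p, A j ∈ Set.Ioo (-1:ℝ) 1 := by
      intro j hj; simp only [hA, dif_pos hj]; exact ha ⟨j, hj⟩
    have hAval : ∀ l : Fin p, A (l : ℕ) = a l := by
      intro l; simp only [hA, dif_pos l.isLt]
    set f : ℕ → ℝ := mkKer A with hf
    have fpos : ∀ j < p, 0 < f j := mkKer_pos hA'
    set νlast : ℝ :=
      -(∑ i : Fin p, (if (i:ℕ) = 0 then A 0 else (-1:ℝ)^((i:ℕ)+1)) * f (i:ℕ)) with hνl
    set ν : Fin (p+1) → ℝ := fun l => if h : (l:ℕ) < p then f (l:ℕ) else νlast with hν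
    have hνc : ∀ l : Fin p, ν l.castSucc = f (l : ℕ) := by
      intro l
      simp only [hν, Fin.coe_castSucc, dif_pos l.isLt]
    have hνlast : ν (Fin.last p) = νlast := by
      simp only [hν, Fin.val_last, lt_irrefl, dif_neg (lt_irrefl p).elim]
      simp
    have key : ∀ k (hk : k < p), (∑ l : Fin (p+1), M ⟨k, hk⟩ l * ν l) = 0 := by
      intro k
      induction k with
      | zero =>
        intro hk
        rw [Fin.sum_univ_castSucc]
        have h1 : ∀ i : Fin p, M ⟨0, hk⟩ i.castSucc * ν i.castSucc
            = (if (i:ℕ) = 0 then A 0 else (-1:ℝ)^((i:ℕ)+1)) * f (i:ℕ) := by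
          intro i
          rw [hνc]
          congr 1
          by_cases h0 : (i:ℕ) = 0
          · have hi : i = ⟨0, hk⟩ := Fin.ext h0
            rw [if_pos h0, hi, hdiag]
            have := hAval (⟨0, hk⟩ : Fin p)
            simpa using this.symm
          · rw [if_neg h0]
            exact habove _ _ (show (0:ℕ) < (i:ℕ) from Nat.pos_of_ne_zero h0)
        rw [Finset.sum_congr rfl (fun i _ => h1 i), hlast, hνlast, hνl]
        ring
      | succ k ih =>
        intro hk
        have hk' : k < p := Nat.lt_of_succ_lt hk
        have ih0 := ih hk'
        have diff : (∑ l : Fin (p+1), (M ⟨k+1, hk⟩ l - M ⟨k, hk'⟩ l) * ν l) = 0 := by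
          rw [Fin.sum_univ_castSucc]
          have hl0 : (M ⟨k+1, hk⟩ (Fin.last p) - M ⟨k, hk'⟩ (Fin.last p)) * ν (Fin.last p) = 0 := by
            rw [hlast, hlast]; ring
          rw [hl0, add_zero]
          set u : Fin p := ⟨k, hk'⟩ with hu
          set v : Fin p := ⟨k+1, hk⟩ with hv
          have huv : u ≠ v := by
            simp [hu, hv, Fin.ext_iff]
          have hsupp : ∀ i ∈ (Finset.univ : Finset (Fin p)),
              i ∉ ({u, v} : Finset (Fin p)) →
              (M v i.castSucc - M u i.castSucc) * ν i.castSucc = 0 := by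
            intro i _ hi
            simp only [Finset.mem_insert, Finset.mem_singleton] at hi
            push_neg at hi
            obtain ⟨hiu, hiv⟩ := hi
            have heq : M v i.castSucc = M u i.castSucc := by
              rcases lt_trichotomy (i:ℕ) k with h | h | h
              · rw [hbelow u i (show (i:ℕ) < k from h),
                    hbelow v i (show (i:ℕ) < k+1 from Nat.lt_succ_of_lt h)]
              · exact absurd (Fin.ext h) hiu
              · have h' : k + 1 < (i:ℕ) :=
                  lt_of_le_of_ne h (fun hc => hiv (Fin.ext hc.symm))
                rw [habove u i (show (k:ℕ) < (i:ℕ) from Nat.lt_of_succ_lt h'),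
                    habove v i (show (k+1:ℕ) < (i:ℕ) from h')]
            rw [heq, sub_self, zero_mul]
          have hsplit : (∑ i : Fin p, (M v i.castSucc - M u i.castSucc) * ν i.castSucc)
              = ∑ i ∈ ({u, v} : Finset (Fin p)),
                  (M v i.castSucc - M u i.castSucc) * ν i.castSucc :=
            (Finset.sum_subset (Finset.subset_univ _) hsupp).symm
          rw [hsplit, Finset.sum_pair huv]
          have hgu : (M v u.castSucc - M u u.castSucc) * ν u.castSucc
              = ((-1:ℝ)^k - A k) * f k := by
            rw [hbelow v u (show (k:ℕ) < k+1 from Nat.lt_succ_self k), hdiag, hνc]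
            rw [show a u = A k from (hAval u).symm]
          have hgv : (M v v.castSucc - M u v.castSucc) * ν v.castSucc
              = (A (k+1) - (-1:ℝ)^k) * f (k+1) := by
            rw [hdiag, habove u v (show (k:ℕ) < k+1 from Nat.lt_succ_self k), hνc]
            rw [show a v = A (k+1) from (hAval v).symm]
            have : ((-1:ℝ))^((k+1)+1) = (-1:ℝ)^k := by
              rw [pow_succ, pow_succ]; ring
            rw [this]
          rw [hgu, hgv]
          have hid := mkKer_identity hA' (p := p) (a := A) (j := k) hk
          rw [← hf] at hid
          linarith [hid]
        calc (∑ l : Fin (p+1), M ⟨k+1, hk⟩ l * ν l)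
            = ∑ l : Fin (p+1), (M ⟨k, hk'⟩ l * ν l + (M ⟨k+1, hk⟩ l - M ⟨k, hk'⟩ l) * ν l) := by
              apply Finset.sum_congr rfl; intro l _; ring
          _ = 0 := by rw [Finset.sum_add_distrib, ih0, diff, add_zero]
    refine ⟨ν, ?_, ?_, ?_⟩
    · intro h
      have h0 : ν (Fin.castSucc ⟨0, hp0⟩) = 0 := by rw [h]; rfl
      rw [hνc] at h0
      have := fpos 0 hp0
      simp only [Fin.val_mk] at h0
      linarith
    · funext j
      have hk := key j.1 j.2
      simpa [Matrix.mulVec, dotProduct] using hk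
    · intro l
      rw [hνc]
      exact fpos _ l.isLt
end

section
/- Let H_0, ..., H_{E-1} be symmetric PSD matrices in ℝ^{n×n} with H = Σ_k H_k, and suppose all nonzero eigenvalues of H lie in [λ_min, λ_max] with λ_min > 0. Let η > 0 satisfy η ≤ min(B/(λ_max E), λ_min B/(2 λ_max² E²)) for some B > 0. Then for any vector ξ in the column space of H, ‖∏_{k=E-1}^{0} (I − (η/B) H_k) ξ‖ ≤ (1 − η λ_min/(2B)) ‖ξ‖, provided additionally that the column spaces of all H_k are contained in that of H. -/
open Matrix

noncomputable def l2norm {n : ℕ} (v : Fin n → ℝ) : ℝ := Real.sqrt (∑ i, v i ^ 2)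

namespace ProdContraction

variable {n : ℕ}

lemma l2norm_eq (v : Fin n → ℝ) : l2norm v = ‖(WithLp.equiv 2 (Fin n → ℝ)).symm v‖ := by
  simp [l2norm, EuclideanSpace.norm_eq, Real.norm_eq_abs, sq_abs]

lemma l2norm_nonneg (v : Fin n → ℝ) : 0 ≤ l2norm v := Real.sqrt_nonneg _

lemma l2norm_zero : l2norm (0 : Fin n → ℝ) = 0 := by simp [l2norm]

lemma l2norm_add_le (u v : Fin n → ℝ) : l2norm (u + v) ≤ l2norm u + l2norm v := by
  rw [l2norm_eq, l2norm_eq, l2norm_eq,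
    show (WithLp.equiv 2 (Fin n → ℝ)).symm (u + v)
      = (WithLp.equiv 2 (Fin n → ℝ)).symm u + (WithLp.equiv 2 (Fin n → ℝ)).symm v from rfl]
  exact norm_add_le _ _

lemma l2norm_smul (c : ℝ) (v : Fin n → ℝ) : l2norm (c • v) = |c| * l2norm v := by
  rw [l2norm_eq, l2norm_eq,
    show (WithLp.equiv 2 (Fin n → ℝ)).symm (c • v)
      = c • (WithLp.equiv 2 (Fin n → ℝ)).symm v from rfl]
  rw [norm_smul, Real.norm_eq_abs]

lemma l2norm_sum_le {ι : Type*} (s : Finset ι) (u : ι → (Fin n → ℝ)) :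
    l2norm (∑ k ∈ s, u k) ≤ ∑ k ∈ s, l2norm (u k) := by
  classical
  induction s using Finset.induction with
  | empty => simp [l2norm_zero]
  | @insert a s h ih =>
      rw [Finset.sum_insert h, Finset.sum_insert h]
      exact le_trans (l2norm_add_le _ _) (by linarith)

lemma l2norm_sq (v : Fin n → ℝ) : l2norm v ^ 2 = v ⬝ᵥ v := by
  rw [l2norm, Real.sq_sqrt (by positivity)]
  simp [dotProduct, pow_two]

lemma le_of_sq {x y : ℝ} (hx : 0 ≤ x) (hy : 0 ≤ y) (h : x ^ 2 ≤ y ^ 2) : x ≤ y := by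
  nlinarith

lemma mulVec_dot (M : Matrix (Fin n) (Fin n) ℝ) (u w : Fin n → ℝ) :
    (M *ᵥ u) ⬝ᵥ w = u ⬝ᵥ (Mᵀ *ᵥ w) := by
  rw [dotProduct_comm, Matrix.dotProduct_mulVec, ← Matrix.mulVec_transpose, dotProduct_comm]

lemma psd_dot {M : Matrix (Fin n) (Fin n) ℝ} (hM : M.PosSemidef) (v : Fin n → ℝ) :
    0 ≤ v ⬝ᵥ (M *ᵥ v) := by
  simpa using hM.dotProduct_mulVec_nonneg v

open scoped MatrixOrder in
lemma opBound {A : Matrix (Fin n) (Fin n) ℝ} (hA : A.PosSemidef) {c : ℝ} (hc : 0 ≤ c)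
    (hq : ∀ v, v ⬝ᵥ (A *ᵥ v) ≤ c * (v ⬝ᵥ v)) (v : Fin n → ℝ) :
    l2norm (A *ᵥ v) ≤ c * l2norm v := by
  have hS : CFC.sqrt A * CFC.sqrt A = A := CFC.sqrt_mul_sqrt_self A hA.nonneg
  have hSsym : (CFC.sqrt A)ᵀ = CFC.sqrt A := (CFC.sqrt_nonneg A).posSemidef.isHermitian
  set S := CFC.sqrt A with hSdef
  have hAv : A *ᵥ v = S *ᵥ (S *ᵥ v) := by rw [Matrix.mulVec_mulVec, hS]
  have hdot : ∀ u w : Fin n → ℝ, (S *ᵥ u) ⬝ᵥ w = u ⬝ᵥ (S *ᵥ w) := by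
    intro u w; rw [mulVec_dot, hSsym]
  have key : (A *ᵥ v) ⬝ᵥ (A *ᵥ v) ≤ c ^ 2 * (v ⬝ᵥ v) := by
    have h1 : (A *ᵥ v) ⬝ᵥ (A *ᵥ v) = (S *ᵥ v) ⬝ᵥ (A *ᵥ (S *ᵥ v)) := by
      rw [hAv, hdot, Matrix.mulVec_mulVec, hS]
    have h2 : (S *ᵥ v) ⬝ᵥ (S *ᵥ v) = v ⬝ᵥ (A *ᵥ v) := by
      rw [hdot, Matrix.mulVec_mulVec, hS]
    have h3 := hq (S *ᵥ v)
    have h4 := hq v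
    have h5 := psd_dot hA v
    nlinarith [h1, h2]
  have := l2norm_sq (A *ᵥ v)
  have := l2norm_sq v
  refine le_of_sq (l2norm_nonneg _) (mul_nonneg hc (l2norm_nonneg _)) ?_
  rw [mul_pow]
  nlinarith [l2norm_sq (A *ᵥ v), l2norm_sq v]


section Spectral

variable {H U : Matrix (Fin n) (Fin n) ℝ} {e : Fin n → ℝ}

lemma dot_coords (hU2 : U * star U = 1) (u v : Fin n → ℝ) :
    (star U *ᵥ u) ⬝ᵥ (star U *ᵥ v) = u ⬝ᵥ v := by
  rw [mulVec_dot, Matrix.mulVec_mulVec]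
  have h : (star U)ᵀ = U := by
    rw [show star U = Uᵀ from rfl, transpose_transpose]
  rw [h, hU2, one_mulVec]

lemma coords_H (hspec : H = U * diagonal e * star U) (hU1 : star U * U = 1) (v : Fin n → ℝ) :
    star U *ᵥ (H *ᵥ v) = fun i => e i * (star U *ᵥ v) i := by
  rw [Matrix.mulVec_mulVec, hspec]
  have h : star U * (U * diagonal e * star U) = diagonal e * star U := by
    rw [← mul_assoc, ← mul_assoc, hU1, one_mul]
  rw [h, ← Matrix.mulVec_mulVec]
  funext i
  rw [Matrix.mulVec_diagonal]

lemma qform_eq (hspec : H = U * diagonal e * star U) (hU1 : star U * U = 1)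
    (hU2 : U * star U = 1) (v : Fin n → ℝ) :
    v ⬝ᵥ (H *ᵥ v) = ∑ i, e i * (star U *ᵥ v) i ^ 2 := by
  rw [← dot_coords hU2 v (H *ᵥ v), coords_H hspec hU1]
  simp only [dotProduct]
  exact Finset.sum_congr rfl fun i _ => by ring

lemma quadH (hspec : H = U * diagonal e * star U) (hU1 : star U * U = 1)
    (hU2 : U * star U = 1) {lmax : ℝ} (hle : ∀ i, e i ≤ lmax) (v : Fin n → ℝ) :
    v ⬝ᵥ (H *ᵥ v) ≤ lmax * (v ⬝ᵥ v) := by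
  rw [qform_eq hspec hU1 hU2, ← dot_coords hU2 v v]
  have h : (star U *ᵥ v) ⬝ᵥ (star U *ᵥ v) = ∑ i, (star U *ᵥ v) i ^ 2 := by
    simp only [dotProduct]; exact Finset.sum_congr rfl fun i _ => by ring
  rw [h, Finset.mul_sum]
  exact Finset.sum_le_sum fun i _ => mul_le_mul_of_nonneg_right (hle i) (sq_nonneg _)

lemma contraction (hspec : H = U * diagonal e * star U) (hU1 : star U * U = 1)
    (hU2 : U * star U = 1) {lmin lmax t : ℝ} (hlmin : 0 < lmin) (hminmax : lmin ≤ lmax)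
    (heig : ∀ i, e i = 0 ∨ (lmin ≤ e i ∧ e i ≤ lmax)) (ht : 0 ≤ t) (htm : t * lmax ≤ 1)
    (w ξ : Fin n → ℝ) (hξ : ξ = H *ᵥ w) :
    l2norm ((1 - t • H) *ᵥ ξ) ≤ (1 - t * lmin) * l2norm ξ := by
  have hc0 : ∀ i, e i = 0 → (star U *ᵥ ξ) i = 0 := by
    intro i h0
    rw [hξ, coords_H hspec hU1]
    simp [h0]
  have hX : (1 - t • H) *ᵥ ξ = ξ - t • (H *ᵥ ξ) := by
    rw [Matrix.sub_mulVec, Matrix.one_mulVec, Matrix.smul_mulVec]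
  have hcX : star U *ᵥ ((1 - t • H) *ᵥ ξ) = fun i => (1 - t * e i) * (star U *ᵥ ξ) i := by
    rw [hX, Matrix.mulVec_sub, Matrix.mulVec_smul, coords_H hspec hU1]
    funext i
    simp only [Pi.sub_apply, Pi.smul_apply, smul_eq_mul]
    ring
  have h1 : l2norm ((1 - t • H) *ᵥ ξ) ^ 2 = ∑ i, ((1 - t * e i) * (star U *ᵥ ξ) i) ^ 2 := by
    rw [l2norm_sq, ← dot_coords hU2, hcX]
    simp only [dotProduct]
    exact Finset.sum_congr rfl fun i _ => by ring
  have h2 : l2norm ξ ^ 2 = ∑ i, (star U *ᵥ ξ) i ^ 2 := by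
    rw [l2norm_sq, ← dot_coords hU2]
    simp only [dotProduct]
    exact Finset.sum_congr rfl fun i _ => by ring
  have hterm : ∀ i, ((1 - t * e i) * (star U *ᵥ ξ) i) ^ 2
      ≤ (1 - t * lmin) ^ 2 * (star U *ᵥ ξ) i ^ 2 := by
    intro i
    rcases heig i with h0 | ⟨ha, hb⟩
    · rw [hc0 i h0]; simp
    · have h3 : t * e i ≤ t * lmax := mul_le_mul_of_nonneg_left hb ht
      have h4 : t * lmin ≤ t * e i := mul_le_mul_of_nonneg_left ha ht
      rw [mul_pow]
      exact mul_le_mul_of_nonneg_right (by nlinarith) (sq_nonneg _)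
  have hpos : 0 ≤ 1 - t * lmin := by nlinarith
  refine le_of_sq (l2norm_nonneg _) (mul_nonneg hpos (l2norm_nonneg _)) ?_
  rw [mul_pow, h1, h2, Finset.mul_sum]
  exact Finset.sum_le_sum fun i _ => hterm i

end Spectral
lemma sum_mulVec' {ι : Type*} (s : Finset ι) (M : ι → Matrix (Fin n) (Fin n) ℝ)
    (v : Fin n → ℝ) : (∑ k ∈ s, M k) *ᵥ v = ∑ k ∈ s, (M k *ᵥ v) := by
  classical
  induction s using Finset.induction with
  | empty => simp
  | @insert a s h ih => rw [Finset.sum_insert h, Finset.sum_insert h, Matrix.add_mulVec, ih]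

lemma matid (D S g : Matrix (Fin n) (Fin n) ℝ) (t : ℝ) :
    (1 - t • g) * (D + (1 - t • S)) - (1 - t • (S + g))
      = (1 - t • g) * D + (t * t) • (g * S) := by
  simp only [mul_add, mul_sub, sub_mul, add_mul, one_mul, mul_one, smul_add, smul_sub,
    Matrix.smul_mul, Matrix.mul_smul, smul_smul]
  abel

def prodUpTo (f : ℕ → Matrix (Fin n) (Fin n) ℝ) : ℕ → Matrix (Fin n) (Fin n) ℝ
  | 0 => 1
  | m + 1 => f m * prodUpTo f m

lemma listProd_eq (f : ℕ → Matrix (Fin n) (Fin n) ℝ) (E : ℕ) :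
    (List.ofFn fun k : Fin E => f k.val).reverse.prod = prodUpTo f E := by
  induction E with
  | zero => simp [prodUpTo]
  | succ m ih =>
      rw [List.ofFn_succ']
      simp only [List.concat_eq_append, List.reverse_append, List.reverse_cons,
        List.reverse_nil, List.nil_append, List.cons_append, List.prod_cons]
      rw [prodUpTo, ← ih]
      rfl

lemma prod_expansion (f : ℕ → Matrix (Fin n) (Fin n) ℝ) {t L : ℝ} (ht : 0 ≤ t) (hL : 0 ≤ L)
    (hop : ∀ k v, l2norm (f k *ᵥ v) ≤ L * l2norm v) (m : ℕ) (v : Fin n → ℝ) :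
    l2norm ((prodUpTo (fun k => 1 - t • f k) m - (1 - t • ∑ k ∈ Finset.range m, f k)) *ᵥ v)
      ≤ ((1 + t * L) ^ m - 1 - m * (t * L)) * l2norm v := by
  induction m with
  | zero => simp [prodUpTo, l2norm_zero]
  | succ m ih =>
      set S : Matrix (Fin n) (Fin n) ℝ := ∑ k ∈ Finset.range m, f k with hS
      set D : Matrix (Fin n) (Fin n) ℝ := prodUpTo (fun k => 1 - t • f k) m - (1 - t • S)
        with hD
      have hP : prodUpTo (fun k => 1 - t • f k) m = D + (1 - t • S) := by rw [hD]; abel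
      have hidentity : prodUpTo (fun k => 1 - t • f k) (m + 1)
            - (1 - t • ∑ k ∈ Finset.range (m+1), f k)
          = (1 - t • f m) * D + (t * t) • (f m * S) := by
        rw [Finset.sum_range_succ, prodUpTo, hP, ← hS]
        exact matid D S (f m) t
      rw [hidentity]
      have hx : 0 ≤ t * L := mul_nonneg ht hL
      -- norm of the applied vector
      have e1 : ((1 - t • f m) * D + (t * t) • (f m * S)) *ᵥ v
          = ((D *ᵥ v) - t • (f m *ᵥ (D *ᵥ v))) + (t * t) • (f m *ᵥ (S *ᵥ v)) := by
        rw [Matrix.add_mulVec, Matrix.smul_mulVec, ← Matrix.mulVec_mulVec,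
          ← Matrix.mulVec_mulVec, Matrix.sub_mulVec, Matrix.one_mulVec,
          Matrix.smul_mulVec]
      rw [e1]
      have hDv := ih
      have hSv : l2norm (S *ᵥ v) ≤ m * (L * l2norm v) := by
        rw [hS, sum_mulVec']
        calc l2norm (∑ k ∈ Finset.range m, f k *ᵥ v) ≤ ∑ k ∈ Finset.range m, l2norm (f k *ᵥ v) :=
              l2norm_sum_le _ _
          _ ≤ ∑ _k ∈ Finset.range m, L * l2norm v := Finset.sum_le_sum fun k _ => hop k v
          _ = m * (L * l2norm v) := by rw [Finset.sum_const, Finset.card_range]; simp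
      have h2 : l2norm ((t * t) • (f m *ᵥ (S *ᵥ v))) ≤ t * t * (L * (m * (L * l2norm v))) := by
        rw [l2norm_smul, abs_of_nonneg (mul_nonneg ht ht)]
        have := hop m (S *ᵥ v)
        have h3 : L * l2norm (S *ᵥ v) ≤ L * (m * (L * l2norm v)) :=
          mul_le_mul_of_nonneg_left hSv hL
        nlinarith [mul_nonneg ht ht]
      have h4 : l2norm ((D *ᵥ v) - t • (f m *ᵥ (D *ᵥ v)))
          ≤ (1 + t * L) * (((1 + t * L) ^ m - 1 - m * (t * L)) * l2norm v) := by
        have h5 : l2norm (t • (f m *ᵥ (D *ᵥ v))) ≤ t * L * l2norm (D *ᵥ v) := by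
          rw [l2norm_smul, abs_of_nonneg ht]
          have := hop m (D *ᵥ v)
          nlinarith
        have h6 := l2norm_add_le (D *ᵥ v) (-(t • (f m *ᵥ (D *ᵥ v))))
        rw [show (D *ᵥ v) + -(t • (f m *ᵥ (D *ᵥ v))) = (D *ᵥ v) - t • (f m *ᵥ (D *ᵥ v)) by abel]
          at h6
        have h7 : l2norm (-(t • (f m *ᵥ (D *ᵥ v)))) = l2norm (t • (f m *ᵥ (D *ᵥ v))) := by
          rw [show -(t • (f m *ᵥ (D *ᵥ v))) = (-1 : ℝ) • (t • (f m *ᵥ (D *ᵥ v))) by simp,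
            l2norm_smul]
          simp
        have h8 : l2norm (D *ᵥ v) ≤ ((1 + t * L) ^ m - 1 - m * (t * L)) * l2norm v := hDv
        have h9 : 0 ≤ l2norm (D *ᵥ v) := l2norm_nonneg _
        nlinarith
      calc l2norm (((D *ᵥ v) - t • (f m *ᵥ (D *ᵥ v))) + (t * t) • (f m *ᵥ (S *ᵥ v)))
          ≤ l2norm ((D *ᵥ v) - t • (f m *ᵥ (D *ᵥ v))) + l2norm ((t * t) • (f m *ᵥ (S *ᵥ v))) :=
            l2norm_add_le _ _
        _ ≤ (1 + t * L) * (((1 + t * L) ^ m - 1 - m * (t * L)) * l2norm v)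
              + t * t * (L * (m * (L * l2norm v))) := add_le_add h4 h2
        _ = ((1 + t * L) ^ (m + 1) - 1 - (m + 1 : ℕ) * (t * L)) * l2norm v := by
            push_cast
            ring


lemma split_mulVec (M N : Matrix (Fin n) (Fin n) ℝ) (v : Fin n → ℝ) :
    M *ᵥ v = N *ᵥ v + (M - N) *ᵥ v := by
  have h : N + (M - N) = M := by abel
  rw [← Matrix.add_mulVec, h]

end ProdContraction

set_option maxHeartbeats 1000000 in
open ProdContraction in
theorem product_contraction (n E : ℕ)
    (A : Fin E → Matrix (Fin n) (Fin n) ℝ)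
    (hA : ∀ k, (A k).PosSemidef)
    (H : Matrix (Fin n) (Fin n) ℝ) (hHdef : H = ∑ k, A k)
    (hH : H.PosSemidef)
    (lmin lmax : ℝ) (hlmin : 0 < lmin)
    (heig : ∀ i, hH.isHermitian.eigenvalues i = 0 ∨
      (lmin ≤ hH.isHermitian.eigenvalues i ∧ hH.isHermitian.eigenvalues i ≤ lmax))
    (B η : ℝ) (hB : 0 < B) (hη : 0 < η)
    (hηbound : η ≤ min (B / (lmax * E)) (lmin * B / (2 * lmax ^ 2 * E ^ 2)))
    (hcol : ∀ (k : Fin E) (v : Fin n → ℝ), ∃ w, (A k).mulVec v = H.mulVec w)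
    (ξ : Fin n → ℝ) (hξ : ∃ w, ξ = H.mulVec w) :
    l2norm (((List.ofFn fun k : Fin E =>
        (1 : Matrix (Fin n) (Fin n) ℝ) - (η / B) • A k).reverse.prod).mulVec ξ) ≤
      (1 - η * lmin / (2 * B)) * l2norm ξ := by
  classical
  have hEl : 0 < lmax * E := by
    by_contra hcon
    push_neg at hcon
    have h1 : η ≤ B / (lmax * E) := le_trans hηbound (min_le_left _ _)
    rcases lt_or_eq_of_le hcon with h' | h'
    · have := div_neg_of_pos_of_neg hB h'
      linarith
    · rw [h', div_zero] at h1
      linarith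
  have hE : 0 < E := by
    rcases Nat.eq_zero_or_pos E with h | h
    · rw [h] at hEl; simp at hEl
    · exact h
  have hE1 : (1 : ℝ) ≤ E := by exact_mod_cast hE
  have hlmax : 0 < lmax := by
    rcases le_or_gt lmax 0 with h | h
    · exfalso; nlinarith [Nat.cast_nonneg (α := ℝ) E]
    · exact h
  set t := η / B with htdef
  have ht : 0 < t := div_pos hη hB
  have hηE : η * (lmax * E) ≤ B := (le_div_iff₀ hEl).mp (le_trans hηbound (min_le_left _ _))
  have hpos2 : (0 : ℝ) < 2 * lmax ^ 2 * E ^ 2 := by positivity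
  have hη2 : η * (2 * lmax ^ 2 * E ^ 2) ≤ lmin * B :=
    (le_div_iff₀ hpos2).mp (le_trans hηbound (min_le_right _ _))
  have htE : t * lmax * (E : ℝ) ≤ 1 := by
    rw [htdef, div_mul_eq_mul_div, div_mul_eq_mul_div, div_le_one hB]
    nlinarith
  have htlmax : t * lmax ≤ 1 := by nlinarith [mul_pos ht hlmax]
  by_cases hξ0 : ξ = 0
  · rw [hξ0]
    simp [Matrix.mulVec_zero, l2norm_zero]
  obtain ⟨w, hw⟩ := hξ
  obtain ⟨U, hspec, hU1, hU2⟩ :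
      ∃ U : Matrix (Fin n) (Fin n) ℝ,
        H = U * diagonal hH.isHermitian.eigenvalues * star U ∧
          star U * U = 1 ∧ U * star U = 1 :=
    ⟨hH.isHermitian.eigenvectorUnitary, by simpa using hH.isHermitian.spectral_theorem,
      by exact_mod_cast Unitary.coe_star_mul_self hH.isHermitian.eigenvectorUnitary,
      by exact_mod_cast Unitary.coe_mul_star_self hH.isHermitian.eigenvectorUnitary⟩
  have hminmax : lmin ≤ lmax := by
    have hnz : 0 < ξ ⬝ᵥ ξ := by
      have hex : ∃ i, ξ i ≠ 0 := by
        by_contra hc; push_neg at hc; exact hξ0 (funext hc)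
      obtain ⟨i, hi⟩ := hex
      exact Finset.sum_pos' (fun j _ => mul_self_nonneg _)
        ⟨i, Finset.mem_univ i, mul_self_pos.mpr hi⟩
    have hcoord : ξ ⬝ᵥ ξ = ∑ i, (star U *ᵥ ξ) i ^ 2 := by
      rw [← dot_coords hU2 ξ ξ]
      simp only [dotProduct]
      exact Finset.sum_congr rfl fun i _ => by ring
    have hex2 : ∃ i, (star U *ᵥ ξ) i ≠ 0 := by
      by_contra hc; push_neg at hc
      rw [hcoord] at hnz
      simp [hc] at hnz
    obtain ⟨i, hi⟩ := hex2
    have hei : hH.isHermitian.eigenvalues i ≠ 0 := by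
      intro h0
      apply hi
      rw [hw, coords_H hspec hU1]
      simp [h0]
    rcases heig i with h0 | ⟨ha, hb⟩
    · exact absurd h0 hei
    · linarith
  have hleig : ∀ i, hH.isHermitian.eigenvalues i ≤ lmax := fun i => by
    rcases heig i with h0 | ⟨_, hb⟩
    · rw [h0]; linarith
    · exact hb
  have hquadH : ∀ v, v ⬝ᵥ (H *ᵥ v) ≤ lmax * (v ⬝ᵥ v) := quadH hspec hU1 hU2 hleig
  have hpsdsum : ∀ s : Finset (Fin E), Matrix.PosSemidef (∑ k ∈ s, A k) := by
    intro s
    refine Finset.sum_induction A _ (fun a b ha hb => ha.add hb) ?_ (fun k _ => hA k)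
    exact Matrix.PosSemidef.zero
  have hAq : ∀ k : Fin E, ∀ v, v ⬝ᵥ (A k *ᵥ v) ≤ lmax * (v ⬝ᵥ v) := by
    intro k v
    have hHA : Matrix.PosSemidef (H - A k) := by
      have heq : H - A k = ∑ j ∈ Finset.univ.erase k, A j := by
        rw [hHdef, ← Finset.sum_erase_add Finset.univ A (Finset.mem_univ k)]
        abel
      rw [heq]; exact hpsdsum _
    have h1 := psd_dot hHA v
    rw [Matrix.sub_mulVec, dotProduct_sub] at h1
    have h2 := hquadH v
    linarith
  have hAop : ∀ k : Fin E, ∀ v, l2norm (A k *ᵥ v) ≤ lmax * l2norm v :=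
    fun k => opBound (hA k) (le_of_lt hlmax) (hAq k)
  set g : ℕ → Matrix (Fin n) (Fin n) ℝ := fun k => if h : k < E then A ⟨k, h⟩ else 0 with hg
  have hgop : ∀ k v, l2norm (g k *ᵥ v) ≤ lmax * l2norm v := by
    intro k v
    by_cases h : k < E
    · simpa [hg, h] using hAop ⟨k, h⟩ v
    · rw [hg]
      simp only [h, dif_neg, not_false_iff]
      rw [Matrix.zero_mulVec, l2norm_zero]
      exact mul_nonneg (le_of_lt hlmax) (l2norm_nonneg v)
  have hlist : (List.ofFn fun k : Fin E => (1 : Matrix (Fin n) (Fin n) ℝ) - t • A k)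
      = List.ofFn fun k : Fin E =>
          (fun j => (1 : Matrix (Fin n) (Fin n) ℝ) - t • g j) k.val := by
    congr 1
    funext k
    simp [hg, k.isLt]
  have hsumH : ∑ k ∈ Finset.range E, g k = H := by
    rw [hHdef, ← Fin.sum_univ_eq_sum_range]
    exact Finset.sum_congr rfl fun k _ => by simp [hg, k.isLt]
  rw [hlist, listProd_eq (fun j => (1 : Matrix (Fin n) (Fin n) ℝ) - t • g j) E]
  set P := prodUpTo (fun j => (1 : Matrix (Fin n) (Fin n) ℝ) - t • g j) E with hPdef
  have hsplit : P *ᵥ ξ = (1 - t • H) *ᵥ ξ + (P - (1 - t • H)) *ᵥ ξ :=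
    split_mulVec P (1 - t • H) ξ
  have hc := contraction hspec hU1 hU2 hlmin hminmax heig (le_of_lt ht) htlmax w ξ hw
  have hrem := prod_expansion g (le_of_lt ht) (le_of_lt hlmax) hgop E ξ
  rw [hsumH] at hrem
  set x := t * lmax with hxdef
  have hx0 : 0 < x := mul_pos ht hlmax
  have hEx : (E : ℝ) * x ≤ 1 := by rw [hxdef]; nlinarith
  have hnum : (1 + x) ^ E - 1 - (E : ℝ) * x ≤ t * lmin / 2 := by
    have h1 : (1 + x) ^ E ≤ Real.exp x ^ E :=
      pow_le_pow_left₀ (by positivity) (by linarith [Real.add_one_le_exp x]) E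
    have h2 : Real.exp x ^ E = Real.exp ((E : ℝ) * x) := by
      rw [← Real.exp_nat_mul]
    have h3 : Real.exp ((E : ℝ) * x) ≤ 1 + (E : ℝ) * x + ((E : ℝ) * x) ^ 2 := by
      have habs : |(E : ℝ) * x| ≤ 1 := by
        rw [abs_of_nonneg (by positivity)]; exact hEx
      have h := Real.exp_bound habs (n := 2) (by norm_num)
      have h2' := (abs_le.mp h).2
      simp [Finset.sum_range_succ] at h2'
      rw [abs_of_pos hx0] at h2'
      nlinarith [sq_nonneg ((E : ℝ) * x), sq_abs ((E : ℝ) * x)]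
    have h4 : ((E : ℝ) * x) ^ 2 ≤ t * lmin / 2 := by
      rw [hxdef, htdef]
      have hmul := mul_le_mul_of_nonneg_left hη2 (le_of_lt hη)
      have hb : (B : ℝ) ≠ 0 := ne_of_gt hB
      calc ((E : ℝ) * (η / B * lmax)) ^ 2
          = η * (η * (2 * lmax ^ 2 * (E : ℝ) ^ 2)) / (2 * B ^ 2) := by
            field_simp
        _ ≤ η * (lmin * B) / (2 * B ^ 2) := by
            have hd : (0:ℝ) < 2 * B ^ 2 := by positivity
            exact (div_le_div_iff_of_pos_right hd).mpr hmul
        _ = η / B * lmin / 2 := by field_simp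
    calc (1 + x) ^ E - 1 - (E : ℝ) * x ≤ Real.exp ((E : ℝ) * x) - 1 - (E : ℝ) * x := by
          rw [← h2]; linarith
      _ ≤ ((E : ℝ) * x) ^ 2 := by linarith
      _ ≤ t * lmin / 2 := h4
  have hns := l2norm_nonneg ξ
  calc l2norm (P *ᵥ ξ)
      ≤ l2norm ((1 - t • H) *ᵥ ξ) + l2norm ((P - (1 - t • H)) *ᵥ ξ) :=
        le_trans (le_of_eq (congrArg l2norm hsplit)) (l2norm_add_le _ _)
    _ ≤ (1 - t * lmin) * l2norm ξ + ((1 + t * lmax) ^ E - 1 - (E : ℝ) * (t * lmax)) * l2norm ξ :=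
        add_le_add hc hrem
    _ ≤ (1 - t * lmin) * l2norm ξ + (t * lmin / 2) * l2norm ξ := by
        have hh := mul_le_mul_of_nonneg_right hnum hns
        rw [hxdef] at hh
        linarith
    _ = (1 - t * lmin / 2) * l2norm ξ := by ring
    _ = (1 - η * lmin / (2 * B)) * l2norm ξ := by rw [htdef]; ring
end
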